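/- Let f, g ∈ ℂᴹ be nonzero vectors. Then there exists an M×M complex matrix Θ with Θᵀ = Θ (symmetric), rank(Θ) ≤ 2, and I_M − Θᴴ·Θ positive semidefinite (i.e. ΘᴴΘ ⪯ I_M, a lossy passive surface), such that fᴴ·Θ·g = ‖f‖·‖g‖. -/

import Mathlib

open Matrix
open scoped ComplexOrder

/-- Euclidean norm of a complex vector. -/
noncomputable def euclNorm {m : ℕ} (v : Fin m → ℂ) : ℝ :=
  Real.sqrt (∑ i, Complex.normSq (v i))

namespace RTLA

open Complex

variable {M : ℕ}

local notation "conj'" => starRingEnd ℂ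

lemma sum_conj_mul_comb (a b : Fin M → ℂ) (x y z w : ℂ) :
    ∑ i, conj' (x * a i + y * b i) * (z * a i + w * b i)
      = conj' x * z * (∑ i, conj' (a i) * a i)
        + conj' x * w * (∑ i, conj' (a i) * b i)
        + conj' y * z * (∑ i, conj' (b i) * a i)
        + conj' y * w * (∑ i, conj' (b i) * b i) := by
  simp only [Finset.mul_sum, ← Finset.sum_add_distrib, map_add, _root_.map_mul]
  exact Finset.sum_congr rfl fun i _ => by ring

lemma sum_conj_mul_comb_left (a b : Fin M → ℂ) (z w : ℂ) :
    ∑ i, conj' (a i) * (z * a i + w * b i)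
      = z * (∑ i, conj' (a i) * a i) + w * (∑ i, conj' (a i) * b i) := by
  simp only [Finset.mul_sum, ← Finset.sum_add_distrib]
  exact Finset.sum_congr rfl fun i _ => by ring

lemma sum_conj_mul_comb_left' (a b : Fin M → ℂ) (z w : ℂ) :
    ∑ i, conj' (b i) * (z * a i + w * b i)
      = z * (∑ i, conj' (b i) * a i) + w * (∑ i, conj' (b i) * b i) := by
  simp only [Finset.mul_sum, ← Finset.sum_add_distrib]
  exact Finset.sum_congr rfl fun i _ => by ring

lemma vmv_mul (u v w z : Fin M → ℂ) :
    vecMulVec u v * vecMulVec w z = (∑ i, v i * w i) • vecMulVec u z := by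
  ext i j
  simp only [mul_apply, vecMulVec_apply, Matrix.smul_apply, smul_eq_mul, Finset.sum_mul]
  exact Finset.sum_congr rfl fun k _ => by ring

lemma vmv_conjTranspose (u v : Fin M → ℂ) :
    (vecMulVec u v)ᴴ = vecMulVec (fun i => conj' (v i)) (fun i => conj' (u i)) := by
  ext i j
  simp only [conjTranspose_apply, vecMulVec_apply, star_mul', RCLike.star_def]
  ring

end RTLA

open RTLA Complex

local notation "conj'" => starRingEnd ℂ

theorem exists_rank_two_lossy_attaining
    {M : ℕ} (f g : Fin M → ℂ) (hf : f ≠ 0) (hg : g ≠ 0) :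
    ∃ Θ : Matrix (Fin M) (Fin M) ℂ, Θᵀ = Θ ∧ Θ.rank ≤ 2 ∧
      (1 - Θᴴ * Θ).PosSemidef ∧
      star f ⬝ᵥ (Θ *ᵥ g) = ((euclNorm f * euclNorm g : ℝ) : ℂ) := by
  classical
  -- positivity of the norms
  obtain ⟨i₀, hi₀⟩ : ∃ i, f i ≠ 0 := Function.ne_iff.mp hf
  obtain ⟨j₀, hj₀⟩ : ∃ j, g j ≠ 0 := Function.ne_iff.mp hg
  have hfpos : 0 < ∑ i, Complex.normSq (f i) :=
    Finset.sum_pos' (fun i _ => Complex.normSq_nonneg _)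
      ⟨i₀, Finset.mem_univ _, Complex.normSq_pos.mpr hi₀⟩
  have hgpos : 0 < ∑ j, Complex.normSq (g j) :=
    Finset.sum_pos' (fun j _ => Complex.normSq_nonneg _)
      ⟨j₀, Finset.mem_univ _, Complex.normSq_pos.mpr hj₀⟩
  have hnfpos : 0 < euclNorm f := Real.sqrt_pos.mpr hfpos
  have hngpos : 0 < euclNorm g := Real.sqrt_pos.mpr hgpos
  set nf : ℝ := euclNorm f with hnf
  set ng : ℝ := euclNorm g with hng
  have hnfsq : nf * nf = ∑ i, Complex.normSq (f i) := Real.mul_self_sqrt hfpos.le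
  have hngsq : ng * ng = ∑ j, Complex.normSq (g j) := Real.mul_self_sqrt hgpos.le
  -- normalized vectors
  set a : Fin M → ℂ := fun i => (nf : ℂ)⁻¹ * f i with ha
  set b : Fin M → ℂ := fun j => (ng : ℂ)⁻¹ * conj' (g j) with hb
  have hA : ∑ i, conj' (a i) * a i = 1 := by
    have step : ∀ i, conj' (a i) * a i = ((nf⁻¹ * nf⁻¹ : ℝ) : ℂ) * (Complex.normSq (f i) : ℂ) := by
      intro i
      have h1 : conj' (a i) * a i = ((nf : ℂ)⁻¹ * (nf : ℂ)⁻¹) * (conj' (f i) * f i) := by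
        simp only [ha, _root_.map_mul, map_inv₀, Complex.conj_ofReal]
        ring
      rw [h1, ← Complex.normSq_eq_conj_mul_self]
      push_cast
      ring
    rw [Finset.sum_congr rfl fun i _ => step i, ← Finset.mul_sum]
    norm_cast
    rw [← hnfsq]
    field_simp
  have hB : ∑ j, conj' (b j) * b j = 1 := by
    have step : ∀ j, conj' (b j) * b j = ((ng⁻¹ * ng⁻¹ : ℝ) : ℂ) * (Complex.normSq (g j) : ℂ) := by
      intro j
      have h1 : conj' (b j) * b j = ((ng : ℂ)⁻¹ * (ng : ℂ)⁻¹) * (g j * conj' (g j)) := by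
        simp only [hb, _root_.map_mul, map_inv₀, Complex.conj_ofReal, Complex.conj_conj]
        ring
      rw [h1, Complex.mul_conj]
      push_cast
      ring
    rw [Finset.sum_congr rfl fun j _ => step j, ← Finset.mul_sum]
    norm_cast
    rw [← hngsq]
    field_simp
  set κ : ℂ := ∑ i, conj' (a i) * b i with hκdef
  set r : ℝ := ‖κ‖ with hrdef
  have hK : ∑ i, conj' (a i) * b i = κ := rfl
  have hK' : ∑ i, conj' (b i) * a i = conj' κ := by
    rw [hκdef, map_sum]
    refine Finset.sum_congr rfl fun i _ => ?_
    simp only [_root_.map_mul, Complex.conj_conj]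
    ring
  have hr0 : 0 ≤ r := norm_nonneg κ
  -- the half-angle phase
  set μ : ℂ := Complex.exp ((κ.arg / 2 : ℝ) * Complex.I) with hμdef
  have hμabs : ‖μ‖ = 1 := Complex.norm_exp_ofReal_mul_I _
  have hμ : conj' μ * μ = 1 := by
    rw [← Complex.normSq_eq_conj_mul_self, ← Complex.sq_norm, hμabs]
    norm_num
  have hxp : κ = (r : ℂ) * (μ * μ) := by
    have hmm : μ * μ = Complex.exp (κ.arg * Complex.I) := by
      rw [hμdef, ← Complex.exp_add]
      congr 1
      push_cast
      ring
    rw [hmm]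
    exact (Complex.norm_mul_exp_arg_mul_I κ).symm
  have hμκ : conj' μ * conj' μ * κ = (r : ℂ) := by
    rw [hxp]
    linear_combination ((r : ℂ) * (conj' μ * μ + 1)) * hμ
  have hμκ' : μ * μ * conj' κ = (r : ℂ) := by
    have h := congrArg conj' hμκ
    simp only [_root_.map_mul, Complex.conj_conj, Complex.conj_ofReal] at h
    linear_combination h
  have hκκ : conj' κ * κ = (r : ℂ) * (r : ℂ) := by
    rw [← Complex.normSq_eq_conj_mul_self, ← Complex.sq_norm]
    push_cast
    ring
  -- unnormalized second Takagi vector, gives r ≤ 1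
  set q : Fin M → ℂ := fun i => μ * a i + (-(conj' μ)) * b i with hq
  have hqq : ∑ i, conj' (q i) * q i = ((2 - 2 * r : ℝ) : ℂ) := by
    simp only [hq]
    rw [sum_conj_mul_comb, hA, hK, hK', hB]
    simp only [map_neg, _root_.map_mul, Complex.conj_conj]
    push_cast
    linear_combination 2 * hμ - hμκ - hμκ'
  have hr1 : r ≤ 1 := by
    have h0 : ∑ i, conj' (q i) * q i = ((∑ i, Complex.normSq (q i) : ℝ) : ℂ) := by
      push_cast
      exact Finset.sum_congr rfl fun i _ => (Complex.normSq_eq_conj_mul_self).symm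
    have h1 : (∑ i, Complex.normSq (q i) : ℝ) = 2 - 2 * r := by
      have := h0.symm.trans hqq
      exact_mod_cast this
    have h2 : 0 ≤ ∑ i, Complex.normSq (q i) :=
      Finset.sum_nonneg fun i _ => Complex.normSq_nonneg _
    linarith
  -- normalization constants
  set n1 : ℝ := Real.sqrt (2 * (1 + r)) with hn1def
  set n2 : ℝ := Real.sqrt (2 * (1 - r)) with hn2def
  have hn1sq : n1 * n1 = 2 * (1 + r) := Real.mul_self_sqrt (by linarith)
  have hn2sq : n2 * n2 = 2 * (1 - r) := Real.mul_self_sqrt (by linarith)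
  have hn1pos : 0 < n1 := Real.sqrt_pos.mpr (by linarith)
  have hn1C : ((n1⁻¹ : ℝ) : ℂ) * ((n1⁻¹ : ℝ) : ℂ) * (2 + 2 * (r : ℂ)) = 1 := by
    have hR : n1⁻¹ * n1⁻¹ * (2 + 2 * r) = 1 := by
      rw [show 2 + 2 * r = n1 * n1 by linarith]
      field_simp
    exact_mod_cast hR
  -- real idempotence facts for the second normalization
  have hsR01 : (n2⁻¹ * n2⁻¹ * (2 - 2 * r) : ℝ) = 0 ∨ (n2⁻¹ * n2⁻¹ * (2 - 2 * r) : ℝ) = 1 := by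
    rcases eq_or_lt_of_le hr1 with h | h
    · left
      rw [h]
      ring
    · right
      have hn2pos : 0 < n2 := Real.sqrt_pos.mpr (by linarith)
      rw [show 2 - 2 * r = n2 * n2 by linarith]
      field_simp
  set s : ℂ := ((n2⁻¹ * n2⁻¹ * (2 - 2 * r) : ℝ) : ℂ) with hsdef
  have hs01 : s = 0 ∨ s = 1 := by
    rcases hsR01 with h | h
    · left; rw [hsdef, h]; norm_num
    · right; rw [hsdef, h]; norm_num
  have hs3 : s * s * s = s := by rcases hs01 with h | h <;> rw [h] <;> ring
  have hs_star : star s = s := by rw [hsdef, RCLike.star_def, Complex.conj_ofReal]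
  -- the Takagi vectors
  set x1 : ℂ := ((n1⁻¹ : ℝ) : ℂ) * μ with hx1
  set y1 : ℂ := ((n1⁻¹ : ℝ) : ℂ) * conj' μ with hy1
  set x2 : ℂ := ((n2⁻¹ : ℝ) : ℂ) * μ with hx2
  set y2 : ℂ := -(((n2⁻¹ : ℝ) : ℂ) * conj' μ) with hy2
  set c₁ : Fin M → ℂ := fun i => x1 * a i + y1 * b i with hc₁
  set c₂ : Fin M → ℂ := fun i => x2 * a i + y2 * b i with hc₂
  -- the four Gram sums
  have hs11 : ∑ i, conj' (c₁ i) * c₁ i = 1 := by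
    simp only [hc₁]
    rw [sum_conj_mul_comb, hA, hK, hK', hB]
    simp only [hx1, hy1, _root_.map_mul, Complex.conj_ofReal, Complex.conj_conj]
    linear_combination (2 * ((n1⁻¹ : ℝ) : ℂ) * ((n1⁻¹ : ℝ) : ℂ)) * hμ +
      (((n1⁻¹ : ℝ) : ℂ) * ((n1⁻¹ : ℝ) : ℂ)) * hμκ +
      (((n1⁻¹ : ℝ) : ℂ) * ((n1⁻¹ : ℝ) : ℂ)) * hμκ' + hn1C
  have hs12 : ∑ i, conj' (c₁ i) * c₂ i = 0 := by
    simp only [hc₁, hc₂]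
    rw [sum_conj_mul_comb, hA, hK, hK', hB]
    simp only [hx1, hy1, hx2, hy2, map_neg, _root_.map_mul, Complex.conj_ofReal,
      Complex.conj_conj]
    linear_combination (-(((n1⁻¹ : ℝ) : ℂ) * ((n2⁻¹ : ℝ) : ℂ))) * hμκ +
      (((n1⁻¹ : ℝ) : ℂ) * ((n2⁻¹ : ℝ) : ℂ)) * hμκ'
  have hs21 : ∑ i, conj' (c₂ i) * c₁ i = 0 := by
    simp only [hc₁, hc₂]
    rw [sum_conj_mul_comb, hA, hK, hK', hB]
    simp only [hx1, hy1, hx2, hy2, map_neg, _root_.map_mul, Complex.conj_ofReal,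
      Complex.conj_conj]
    linear_combination (((n1⁻¹ : ℝ) : ℂ) * ((n2⁻¹ : ℝ) : ℂ)) * hμκ +
      (-(((n1⁻¹ : ℝ) : ℂ) * ((n2⁻¹ : ℝ) : ℂ))) * hμκ'
  have hs22 : ∑ i, conj' (c₂ i) * c₂ i = s := by
    simp only [hc₂]
    rw [sum_conj_mul_comb, hA, hK, hK', hB]
    simp only [hx2, hy2, map_neg, _root_.map_mul, Complex.conj_ofReal, Complex.conj_conj]
    have hsC : s = ((n2⁻¹ : ℝ) : ℂ) * ((n2⁻¹ : ℝ) : ℂ) * (2 - 2 * (r : ℂ)) := by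
      rw [hsdef]
      push_cast
      ring
    rw [hsC]
    linear_combination (2 * ((n2⁻¹ : ℝ) : ℂ) * ((n2⁻¹ : ℝ) : ℂ)) * hμ +
      (-(((n2⁻¹ : ℝ) : ℂ) * ((n2⁻¹ : ℝ) : ℂ))) * hμκ +
      (-(((n2⁻¹ : ℝ) : ℂ) * ((n2⁻¹ : ℝ) : ℂ))) * hμκ'
  -- commuted versions
  have hs11' : ∑ i, c₁ i * conj' (c₁ i) = 1 := by
    rw [← hs11]; exact Finset.sum_congr rfl fun i _ => mul_comm _ _
  have hs12' : ∑ i, c₂ i * conj' (c₁ i) = 0 := by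
    rw [← hs12]; exact Finset.sum_congr rfl fun i _ => mul_comm _ _
  have hs21' : ∑ i, c₁ i * conj' (c₂ i) = 0 := by
    rw [← hs21]; exact Finset.sum_congr rfl fun i _ => mul_comm _ _
  have hs22' : ∑ i, c₂ i * conj' (c₂ i) = s := by
    rw [← hs22]; exact Finset.sum_congr rfl fun i _ => mul_comm _ _
  -- the scattering matrix
  set Θ : Matrix (Fin M) (Fin M) ℂ := vecMulVec c₁ c₁ - vecMulVec c₂ c₂ with hΘ
  refine ⟨Θ, ?_, ?_, ?_, ?_⟩
  · -- symmetric
    ext i j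
    simp only [hΘ, transpose_apply, Matrix.sub_apply, vecMulVec_apply]
    ring
  · -- rank ≤ 2
    have hfac : Θ = (Matrix.of fun i (t : Fin 2) => if t = 0 then c₁ i else c₂ i) *
        (Matrix.of fun (t : Fin 2) j => if t = 0 then c₁ j else -c₂ j) := by
      ext i j
      rw [Matrix.mul_apply, Fin.sum_univ_two]
      simp only [hΘ, Matrix.sub_apply, vecMulVec_apply, Matrix.of_apply]
      norm_num
      ring
    calc Θ.rank ≤ (Matrix.of fun i (t : Fin 2) => if t = 0 then c₁ i else c₂ i).rank := by
          rw [hfac]; exact Matrix.rank_mul_le_left _ _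
      _ ≤ Fintype.card (Fin 2) := Matrix.rank_le_card_width _
      _ = 2 := by simp
  · -- lossy : 1 - ΘᴴΘ ⪰ 0
    set P : Matrix (Fin M) (Fin M) ℂ :=
      vecMulVec (fun i => conj' (c₁ i)) c₁ + s • vecMulVec (fun i => conj' (c₂ i)) c₂ with hPdef
    have hΘH : Θᴴ = vecMulVec (fun i => conj' (c₁ i)) (fun i => conj' (c₁ i))
        - vecMulVec (fun i => conj' (c₂ i)) (fun i => conj' (c₂ i)) := by
      rw [hΘ, conjTranspose_sub, vmv_conjTranspose, vmv_conjTranspose]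
    have hTT : Θᴴ * Θ = P := by
      rw [hΘH, hΘ, sub_mul, mul_sub, mul_sub, hPdef]
      simp only [vmv_mul]
      rw [hs11, hs12, hs21, hs22]
      simp only [one_smul, zero_smul, zero_sub, sub_zero, sub_neg_eq_add]
    have hPH : Pᴴ = P := by
      rw [hPdef]
      simp only [conjTranspose_add, conjTranspose_smul, vmv_conjTranspose,
        Complex.conj_conj, hs_star]
    have hP2 : P * P = P := by
      rw [hPdef]
      rw [add_mul, mul_add, mul_add]
      simp only [Matrix.smul_mul, Matrix.mul_smul, vmv_mul]
      rw [hs11', hs12', hs21', hs22']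
      simp only [one_smul, zero_smul, smul_zero, add_zero, zero_add, smul_smul]
      rw [show s * (s * s) = s from by linear_combination hs3]
    have h1 : (1 - P)ᴴ = 1 - P := by
      rw [conjTranspose_sub, conjTranspose_one, hPH]
    have h2 : (1 - P) * (1 - P) = 1 - P := by
      rw [sub_mul, one_mul, mul_sub, mul_one, hP2, sub_self, sub_zero]
    rw [hTT]
    have hps := Matrix.posSemidef_conjTranspose_mul_self (1 - P)
    rw [h1, h2] at hps
    exact hps
  · -- attains the bound
    have hnf0 : (nf : ℂ) ≠ 0 := by exact_mod_cast hnfpos.ne'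
    have hng0 : (ng : ℂ) ≠ 0 := by exact_mod_cast hngpos.ne'
    have hfa : ∀ i, conj' (f i) = (nf : ℂ) * conj' (a i) := by
      intro i
      simp only [ha, _root_.map_mul, map_inv₀, Complex.conj_ofReal]
      field_simp
    have hgb : ∀ j, g j = (ng : ℂ) * conj' (b j) := by
      intro j
      simp only [hb, _root_.map_mul, map_inv₀, Complex.conj_ofReal, Complex.conj_conj]
      field_simp
    have hac₁ : ∑ i, conj' (a i) * c₁ i = x1 + y1 * κ := by
      simp only [hc₁]; rw [sum_conj_mul_comb_left a b, hA, hK]; ring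
    have hac₂ : ∑ i, conj' (a i) * c₂ i = x2 + y2 * κ := by
      simp only [hc₂]; rw [sum_conj_mul_comb_left a b, hA, hK]; ring
    have hbc₁ : ∑ j, conj' (b j) * c₁ j = x1 * conj' κ + y1 := by
      simp only [hc₁]; rw [sum_conj_mul_comb_left' a b, hK', hB]; ring
    have hbc₂ : ∑ j, conj' (b j) * c₂ j = x2 * conj' κ + y2 := by
      simp only [hc₂]; rw [sum_conj_mul_comb_left' a b, hK', hB]; ring
    have hmv : ∀ i, (Θ *ᵥ g) i
        = (ng : ℂ) * (c₁ i * (x1 * conj' κ + y1) - c₂ i * (x2 * conj' κ + y2)) := by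
      intro i
      have step : ∀ j, Θ i j * g j
          = (ng : ℂ) * c₁ i * (conj' (b j) * c₁ j) - (ng : ℂ) * c₂ i * (conj' (b j) * c₂ j) := by
        intro j
        rw [hgb j]
        simp only [hΘ, Matrix.sub_apply, vecMulVec_apply]
        ring
      show ∑ j, Θ i j * g j = _
      rw [Finset.sum_congr rfl fun j _ => step j, Finset.sum_sub_distrib,
        ← Finset.mul_sum, ← Finset.mul_sum, hbc₁, hbc₂]
      ring
    have hhalf1 : ((n1⁻¹ : ℝ) : ℂ) * ((n1⁻¹ : ℝ) : ℂ) * ((1 + (r : ℂ)) * (1 + (r : ℂ)))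
        = (1 + (r : ℂ)) / 2 := by
      have hR : n1⁻¹ * n1⁻¹ * ((1 + r) * (1 + r)) = (1 + r) / 2 := by
        rw [show (1 : ℝ) + r = n1 * n1 / 2 by linarith]
        field_simp
      exact_mod_cast hR
    have hhalf2 : ((n2⁻¹ : ℝ) : ℂ) * ((n2⁻¹ : ℝ) : ℂ) * ((1 - (r : ℂ)) * (1 - (r : ℂ)))
        = (1 - (r : ℂ)) / 2 := by
      have hR : n2⁻¹ * n2⁻¹ * ((1 - r) * (1 - r)) = (1 - r) / 2 := by
        rcases eq_or_lt_of_le hr1 with h | h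
        · rw [h]; norm_num
        · have hn2pos : 0 < n2 := Real.sqrt_pos.mpr (by linarith)
          rw [show (1 : ℝ) - r = n2 * n2 / 2 by linarith]
          field_simp
      exact_mod_cast hR
    have etot : (x1 + y1 * κ) * (x1 * conj' κ + y1) - (x2 + y2 * κ) * (x2 * conj' κ + y2)
        = 1 := by
      simp only [hx1, hy1, hx2, hy2]
      linear_combination
        (((n1⁻¹ : ℝ) : ℂ) * ((n1⁻¹ : ℝ) : ℂ)) * hμκ' +
        (((n1⁻¹ : ℝ) : ℂ) * ((n1⁻¹ : ℝ) : ℂ) * (1 + κ * conj' κ)) * hμ +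
        (((n1⁻¹ : ℝ) : ℂ) * ((n1⁻¹ : ℝ) : ℂ)) * hμκ +
        (((n1⁻¹ : ℝ) : ℂ) * ((n1⁻¹ : ℝ) : ℂ)) * hκκ +
        (-(((n2⁻¹ : ℝ) : ℂ) * ((n2⁻¹ : ℝ) : ℂ))) * hμκ' +
        (((n2⁻¹ : ℝ) : ℂ) * ((n2⁻¹ : ℝ) : ℂ) * (1 + κ * conj' κ)) * hμ +
        (-(((n2⁻¹ : ℝ) : ℂ) * ((n2⁻¹ : ℝ) : ℂ))) * hμκ +
        (((n2⁻¹ : ℝ) : ℂ) * ((n2⁻¹ : ℝ) : ℂ)) * hκκ +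
        hhalf1 + hhalf2
    calc star f ⬝ᵥ (Θ *ᵥ g)
        = ∑ i, conj' (f i) * ((ng : ℂ) * (c₁ i * (x1 * conj' κ + y1)
            - c₂ i * (x2 * conj' κ + y2))) := by
          simp only [dotProduct, Pi.star_apply, RCLike.star_def]
          exact Finset.sum_congr rfl fun i _ => by rw [hmv i]
      _ = (nf : ℂ) * (ng : ℂ) * ((∑ i, conj' (a i) * c₁ i) * (x1 * conj' κ + y1)
            - (∑ i, conj' (a i) * c₂ i) * (x2 * conj' κ + y2)) := by
          have step2 : ∀ i, conj' (f i) * ((ng : ℂ) * (c₁ i * (x1 * conj' κ + y1)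
                - c₂ i * (x2 * conj' κ + y2)))
              = ((nf : ℂ) * (ng : ℂ) * (x1 * conj' κ + y1)) * (conj' (a i) * c₁ i)
                - ((nf : ℂ) * (ng : ℂ) * (x2 * conj' κ + y2)) * (conj' (a i) * c₂ i) := by
            intro i
            rw [hfa i]
            ring
          rw [Finset.sum_congr rfl fun i _ => step2 i, Finset.sum_sub_distrib,
            ← Finset.mul_sum, ← Finset.mul_sum]
          ring
      _ = ((nf * ng : ℝ) : ℂ) := by
          rw [hac₁, hac₂, etot]
          push_cast
          ring
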